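/- The cumulative distribution function F(x) = ∫_{-∞}^x 2|s|/(π(1-y²)√(c²-y²))·1_{[0,|c|)}(y) dy satisfies F(x) = 0 for x ≤ 0, F(x) = 1 for x ≥ |c|, and F is continuous and monotone nondecreasing on ℝ, where c = cos θ ≠ 0 and s = sin θ ≠ 0. -/

import Mathlib

open MeasureTheory Set Real intervalIntegral

-- density
noncomputable def hlDens (a b y : ℝ) : ℝ :=
  2 * b / (Real.pi * (1 - y ^ 2) * Real.sqrt (a ^ 2 - y ^ 2))

-- antiderivative
noncomputable def hlAnti (a b x : ℝ) : ℝ :=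
  (2 / Real.pi) * Real.arcsin (b * x / (a * Real.sqrt (1 - x ^ 2)))

lemma hlAnti_deriv {a b : ℝ} (ha0 : 0 < a) (ha1 : a < 1) (hb0 : 0 < b)
    (hb2 : b ^ 2 = 1 - a ^ 2) {x : ℝ} (hx : x ∈ Set.Ioo 0 a) :
    HasDerivAt (hlAnti a b) (hlDens a b x) x := by
  obtain ⟨hx0, hxa⟩ := hx
  have hx1 : x < 1 := hxa.trans ha1
  have h1x : (0:ℝ) < 1 - x ^ 2 := by nlinarith
  have hax : (0:ℝ) < a ^ 2 - x ^ 2 := by nlinarith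
  set r := Real.sqrt (1 - x ^ 2) with hr
  set q := Real.sqrt (a ^ 2 - x ^ 2) with hq
  have hrpos : 0 < r := Real.sqrt_pos.2 h1x
  have hqpos : 0 < q := Real.sqrt_pos.2 hax
  have hr2 : r ^ 2 = 1 - x ^ 2 := Real.sq_sqrt h1x.le
  have hq2 : q ^ 2 = a ^ 2 - x ^ 2 := Real.sq_sqrt hax.le
  -- derivative of the denominator a * sqrt (1 - x^2)
  have hinner : HasDerivAt (fun y : ℝ => 1 - y ^ 2) (-(2 * x)) x := by
    simpa using ((hasDerivAt_pow 2 x).const_sub 1)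
  have hsqrt : HasDerivAt (fun y : ℝ => Real.sqrt (1 - y ^ 2))
      (1 / (2 * r) * (-(2 * x))) x := by
    exact (Real.hasDerivAt_sqrt h1x.ne').comp x hinner
  have hden : HasDerivAt (fun y : ℝ => a * Real.sqrt (1 - y ^ 2))
      (a * (1 / (2 * r) * (-(2 * x)))) x := hsqrt.const_mul a
  have hnum : HasDerivAt (fun y : ℝ => b * y) b x := by
    simpa using (hasDerivAt_id x).const_mul b
  have hdenne : a * r ≠ 0 := by positivity
  have hphi : HasDerivAt (fun y : ℝ => b * y / (a * Real.sqrt (1 - y ^ 2)))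
      ((b * (a * r) - b * x * (a * (1 / (2 * r) * (-(2 * x))))) / (a * r) ^ 2) x := by
    exact hnum.div hden hdenne
  have hphix : b * x / (a * r) < 1 := by
    rw [div_lt_one (by positivity)]
    have h2 : (b * x) ^ 2 < (a * r) ^ 2 := by nlinarith [hr2, hb2]
    exact lt_of_pow_lt_pow_left₀ 2 (by positivity) h2
  have hphix0 : 0 < b * x / (a * r) := by positivity
  have harc : HasDerivAt Real.arcsin
      (1 / Real.sqrt (1 - (b * x / (a * r)) ^ 2)) (b * x / (a * r)) :=
    Real.hasDerivAt_arcsin (by linarith) (ne_of_lt hphix)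
  have hcomp := (harc.comp x hphi).const_mul (2 / Real.pi)
  have key : 1 - (b * x / (a * r)) ^ 2 = (q / (a * r)) ^ 2 := by
    field_simp
    nlinarith [hr2, hq2]
  have hsq : Real.sqrt (1 - (b * x / (a * r)) ^ 2) = q / (a * r) := by
    rw [key, Real.sqrt_sq (by positivity)]
  refine hcomp.congr_deriv ?_
  symm
  rw [hsq]
  unfold hlDens
  have hpi : Real.pi ≠ 0 := Real.pi_ne_zero
  have h1xne : (1 - x ^ 2) ≠ 0 := h1x.ne'
  rw [show Real.sqrt (a ^ 2 - x ^ 2) = q from rfl]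
  field_simp
  linear_combination (x ^ 2) * hr2

lemma hlAnti_contOn {a b : ℝ} (ha0 : 0 < a) (ha1 : a < 1) :
    ContinuousOn (hlAnti a b) (Set.Icc 0 a) := by
  unfold hlAnti
  apply ContinuousOn.mul continuousOn_const
  apply Real.continuous_arcsin.comp_continuousOn
  apply ContinuousOn.div (by fun_prop)
  · exact (continuous_const.mul ((continuous_const.sub (continuous_pow 2)).sqrt)).continuousOn
  · intro x hx
    have hx1 : x ^ 2 < 1 := by
      rcases hx with ⟨h0, h1⟩; nlinarith
    have : 0 < Real.sqrt (1 - x ^ 2) := Real.sqrt_pos.2 (by linarith)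
    positivity

lemma hlDens_nonneg {a b : ℝ} (ha1 : a < 1) (hb0 : 0 ≤ b) {x : ℝ}
    (hx : x ∈ Set.Ioo 0 a) : 0 ≤ hlDens a b x := by
  obtain ⟨hx0, hxa⟩ := hx
  have hx1 : x < 1 := hxa.trans ha1
  have h1x : (0:ℝ) < 1 - x ^ 2 := by nlinarith
  have hpi := Real.pi_pos
  unfold hlDens
  have : 0 ≤ Real.sqrt (a ^ 2 - x ^ 2) := Real.sqrt_nonneg _
  positivity

lemma hlDens_integrableOn {a b : ℝ} (ha0 : 0 < a) (ha1 : a < 1) (hb0 : 0 < b)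
    (hb2 : b ^ 2 = 1 - a ^ 2) : IntegrableOn (hlDens a b) (Set.Ioc 0 a) := by
  exact integrableOn_deriv_of_nonneg (hlAnti_contOn ha0 ha1)
    (fun x hx => hlAnti_deriv ha0 ha1 hb0 hb2 hx)
    (fun x hx => hlDens_nonneg ha1 hb0.le hx)

lemma hlDens_integral {a b : ℝ} (ha0 : 0 < a) (ha1 : a < 1) (hb0 : 0 < b)
    (hb2 : b ^ 2 = 1 - a ^ 2) : ∫ y in (0:ℝ)..a, hlDens a b y = 1 := by
  rw [integral_eq_sub_of_hasDeriv_right_of_le ha0.le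
    (hlAnti_contOn ha0 ha1)
    (fun x hx => (hlAnti_deriv ha0 ha1 hb0 hb2 hx).hasDerivWithinAt)
    ((intervalIntegrable_iff_integrableOn_Ioc_of_le ha0.le).2
      (hlDens_integrableOn ha0 ha1 hb0 hb2))]
  have hsr : Real.sqrt (1 - a ^ 2) = b := by
    rw [← hb2, Real.sqrt_sq hb0.le]
  unfold hlAnti
  rw [hsr]
  have : b * a / (a * b) = 1 := by field_simp
  rw [this]
  simp [Real.arcsin_one, Real.arcsin_zero]

theorem half_line_limit_cdf_properties (θ : ℝ) (hc : Real.cos θ ≠ 0) (hs : Real.sin θ ≠ 0) :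
    let F : ℝ → ℝ := fun x => ∫ y in Set.Iic x,
      Set.indicator (Set.Ico 0 |Real.cos θ|)
        (fun y => 2 * |Real.sin θ| /
          (Real.pi * (1 - y ^ 2) * Real.sqrt (Real.cos θ ^ 2 - y ^ 2))) y
    (∀ x : ℝ, x ≤ 0 → F x = 0) ∧
    (∀ x : ℝ, |Real.cos θ| ≤ x → F x = 1) ∧
    Continuous F ∧ Monotone F := by
  intro F
  set a := |Real.cos θ| with ha
  set b := |Real.sin θ| with hb
  have ha0 : 0 < a := abs_pos.2 hc
  have hb0 : 0 < b := abs_pos.2 hs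
  have hb2 : b ^ 2 = 1 - a ^ 2 := by
    rw [hb, ha, sq_abs, sq_abs]
    have := Real.sin_sq_add_cos_sq θ
    linarith
  have ha1 : a < 1 := by nlinarith
  have hfun : (fun y => 2 * |Real.sin θ| /
      (Real.pi * (1 - y ^ 2) * Real.sqrt (Real.cos θ ^ 2 - y ^ 2))) = hlDens a b := by
    funext y
    simp only [hlDens, ← hb, ha, sq_abs]
  have hFdef : F = fun x => ∫ y in Set.Iic x, (Set.Ico 0 a).indicator (hlDens a b) y := by
    funext x
    show (∫ y in Set.Iic x, (Set.Ico (0:ℝ) a).indicator _ y) = _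
    rw [hfun]
  have hIoc : IntegrableOn (hlDens a b) (Set.Ioc 0 a) := hlDens_integrableOn ha0 ha1 hb0 hb2
  have hIco : IntegrableOn (hlDens a b) (Set.Ico 0 a) :=
    hIoc.congr_set_ae Ico_ae_eq_Ioc
  have hind : Integrable ((Set.Ico 0 a).indicator (hlDens a b)) :=
    (integrable_indicator_iff measurableSet_Ico).2 hIco
  have hnonneg : ∀ y, 0 ≤ (Set.Ico 0 a).indicator (hlDens a b) y := by
    intro y
    apply Set.indicator_nonneg
    intro z hz
    have h1z : (0:ℝ) < 1 - z ^ 2 := by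
      rcases hz with ⟨h0, h1⟩; nlinarith
    have hpi := Real.pi_pos
    have : 0 ≤ Real.sqrt (a ^ 2 - z ^ 2) := Real.sqrt_nonneg _
    unfold hlDens
    positivity
  refine ⟨?_, ?_, ?_, ?_⟩
  · intro x hx
    rw [hFdef]
    simp only
    rw [setIntegral_indicator measurableSet_Ico]
    have hnull : volume (Set.Iic x ∩ Set.Ico 0 a) = 0 := by
      refine measure_mono_null (t := {(0:ℝ)}) ?_ (measure_singleton 0)
      intro y hy
      rcases hy with ⟨hy1, hy2, _⟩
      simp only [Set.mem_Iic] at hy1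
      simp [le_antisymm (hy1.trans hx) hy2]
    rw [Measure.restrict_eq_zero.2 hnull]
    exact integral_zero_measure _
  · intro x hx
    rw [hFdef]
    simp only
    rw [setIntegral_indicator measurableSet_Ico]
    have hsub : Set.Iic x ∩ Set.Ico 0 a = Set.Ico 0 a :=
      Set.inter_eq_self_of_subset_right (fun y hy => Set.mem_Iic.2 (le_trans (le_of_lt hy.2) hx))
    rw [hsub,
      MeasureTheory.integral_Ico_eq_integral_Ioo,
      ← MeasureTheory.integral_Ioc_eq_integral_Ioo,
      ← intervalIntegral.integral_of_le ha0.le]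
    exact hlDens_integral ha0 ha1 hb0 hb2
  · rw [hFdef]
    have : (fun x => ∫ y in Set.Iic x, (Set.Ico 0 a).indicator (hlDens a b) y)
        = fun x => (∫ y in Set.Iic 0, (Set.Ico 0 a).indicator (hlDens a b) y)
          + ∫ y in (0:ℝ)..x, (Set.Ico 0 a).indicator (hlDens a b) y := by
      funext x
      rw [← intervalIntegral.integral_Iic_sub_Iic hind.integrableOn hind.integrableOn]
      ring
    rw [this]
    exact continuous_const.add (hind.continuous_primitive 0)
  · intro x y hxy
    rw [hFdef]
    simp only
    apply setIntegral_mono_set hind.integrableOn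
    · exact Filter.Eventually.of_forall hnonneg
    · exact HasSubset.Subset.eventuallyLE (Set.Iic_subset_Iic.2 hxy)
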